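/- arXiv:1706.05546 — 2 statements merged into one kernel-verified Lean document; each statement's English description precedes it below -/
import Mathlib

section
/- For any associative algebra A over F, a ∈ A, and n ∈ ℕ, the following operator identity holds: (∑_{i=0}^n S_i) ∘ (∑_{j=0}^n S'_j) = I + (bad a)_{n+1} ∘ (∑_{r=0}^{n-1} ((q^{2n+1} - q^{-2n-1})/(q^{n+r+1} - q^{-n-r-1})) (bad a)_{r+1}). -/
open Finset
variable {F : Type*} [Field F] {A : Type*} [Ring A] [Algebra F A]

/-- The quantum adjoint map `ad_r a : x ↦ q^r a x - q^{-r} x a`. -/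
noncomputable def qad (q : F) (a : A) (r : ℤ) (x : A) : A :=
  q ^ r • (a * x) - q ^ (-r) • (x * a)

/-- `bad_m a` : the balanced version of `ad`. -/
noncomputable def bad (q : F) (a : A) : ℕ → A → A
  | 0, x => (q - q⁻¹)⁻¹ • qad q a 0 x
  | (m + 1), x =>
      (((q ^ (2 * (m + 1) : ℤ) - q ^ (-(2 * (m + 1)) : ℤ)) *
          (q ^ (2 * (m + 1) + 1 : ℤ) - q ^ (-(2 * (m + 1)) - 1 : ℤ)))⁻¹) •
        ((q ^ (2 * (m + 1) : ℤ) - q ^ (-(2 * (m + 1)) : ℤ)) ^ 2 • x +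
          qad q a ((m : ℤ) + 1) (qad q a (-((m : ℤ) + 1)) x))

/-- `(bad a)_m = bad_{m-1} a ∘ ⋯ ∘ bad_0 a`, with `(bad a)_0 = id`. -/
noncomputable def badProd (q : F) (a : A) : ℕ → A → A
  | 0 => id
  | (m + 1) => bad q a m ∘ badProd q a m

variable (q : F) (a : A)

lemma bad_zero (x : A) : bad q a 0 x = (q - q⁻¹)⁻¹ • qad q a 0 x := rfl

lemma bad_succ (m : ℕ) (x : A) : bad q a (m + 1) x =
    (((q ^ (2 * (m + 1) : ℤ) - q ^ (-(2 * (m + 1)) : ℤ)) *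
        (q ^ (2 * (m + 1) + 1 : ℤ) - q ^ (-(2 * (m + 1)) - 1 : ℤ)))⁻¹) •
      ((q ^ (2 * (m + 1) : ℤ) - q ^ (-(2 * (m + 1)) : ℤ)) ^ 2 • x +
        qad q a ((m : ℤ) + 1) (qad q a (-((m : ℤ) + 1)) x)) := rfl

lemma qad_add (r : ℤ) (x y : A) : qad q a r (x + y) = qad q a r x + qad q a r y := by
  simp only [qad, mul_add, add_mul, smul_add]; abel

lemma qad_smul (r : ℤ) (c : F) (x : A) : qad q a r (c • x) = c • qad q a r x := by
  simp only [qad, mul_smul_comm, smul_mul_assoc, smul_sub, smul_smul, mul_comm]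

lemma qad_qad (r s : ℤ) (x : A) : qad q a r (qad q a s x) =
    (q ^ r * q ^ s) • (a * a * x) - (q ^ r * q ^ (-s) + q ^ s * q ^ (-r)) • (a * x * a)
      + (q ^ (-r) * q ^ (-s)) • (x * a * a) := by
  simp only [qad, mul_sub, sub_mul, smul_sub, mul_smul_comm, smul_mul_assoc, smul_smul,
    mul_assoc, add_smul]
  match_scalars <;> ring

lemma qad_comm (r s : ℤ) (x : A) : qad q a r (qad q a s x) = qad q a s (qad q a r x) := by
  rw [qad_qad, qad_qad]; match_scalars <;> ring

lemma bad_add (m : ℕ) (x y : A) : bad q a m (x + y) = bad q a m x + bad q a m y := by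
  cases m with
  | zero => simp [bad, qad_add, smul_add]
  | succ m => simp only [bad_succ, qad_add, smul_add]; abel

lemma bad_smul (m : ℕ) (c : F) (x : A) : bad q a m (c • x) = c • bad q a m x := by
  cases m with
  | zero => simp [bad_zero, qad_smul, smul_smul, mul_comm]
  | succ m =>
      simp only [bad_succ, qad_smul, smul_smul, smul_add]
      match_scalars <;> ring

lemma qad_bad (r : ℤ) (m : ℕ) (x : A) : qad q a r (bad q a m x) = bad q a m (qad q a r x) := by
  cases m with
  | zero => simp only [bad_zero, qad_smul, qad_comm]
  | succ m => simp only [bad_succ, qad_smul, qad_add, qad_comm]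

lemma bad_bad (k m : ℕ) (x : A) : bad q a k (bad q a m x) = bad q a m (bad q a k x) := by
  cases m with
  | zero => rw [bad_zero, bad_zero, bad_smul, qad_bad]
  | succ m =>
      rw [bad_succ, bad_succ, bad_smul, bad_add, bad_smul, qad_bad, qad_bad]

lemma badProd_add (m : ℕ) (x y : A) :
    badProd q a m (x + y) = badProd q a m x + badProd q a m y := by
  induction m with
  | zero => simp [badProd]
  | succ m ih => simp only [badProd, Function.comp_apply, ih, bad_add]

lemma badProd_smul (m : ℕ) (c : F) (x : A) :
    badProd q a m (c • x) = c • badProd q a m x := by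
  induction m with
  | zero => simp [badProd]
  | succ m ih => simp only [badProd, Function.comp_apply, ih, bad_smul]

lemma qad_badProd (r : ℤ) (m : ℕ) (x : A) :
    qad q a r (badProd q a m x) = badProd q a m (qad q a r x) := by
  induction m with
  | zero => simp [badProd]
  | succ m ih => simp only [badProd, Function.comp_apply, qad_bad, ih]

lemma bad_badProd (k m : ℕ) (x : A) :
    bad q a k (badProd q a m x) = badProd q a m (bad q a k x) := by
  induction m with
  | zero => simp [badProd]
  | succ m ih => simp only [badProd, Function.comp_apply]; rw [bad_bad, ih]

lemma badProd_badProd (k m : ℕ) (x : A) :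
    badProd q a k (badProd q a m x) = badProd q a m (badProd q a k x) := by
  induction m with
  | zero => simp [badProd]
  | succ m ih => simp only [badProd, Function.comp_apply]; rw [← bad_badProd, ih]

/-- bracket `(k) = q^k - q^{-k}` -/
noncomputable def brk (q : F) (k : ℤ) : F := q ^ k - q ^ (-k)

variable {q} in
lemma zpow_ne_one (hq : q ≠ 0) (hroot : ∀ n : ℕ, 0 < n → q ^ n ≠ 1)
    {k : ℤ} (hk : k ≠ 0) : q ^ k ≠ 1 := by
  rcases lt_or_gt_of_ne hk with h | h
  · intro hc
    have h1 : q ^ (-k) = 1 := by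
      rw [zpow_neg, hc, inv_one]
    have h2 : q ^ ((-k).toNat) = 1 := by
      rw [← zpow_natCast, Int.toNat_of_nonneg (by omega)]; exact h1
    exact hroot _ (by omega) h2
  · intro hc
    have h2 : q ^ (k.toNat) = 1 := by
      rw [← zpow_natCast, Int.toNat_of_nonneg (by omega)]; exact hc
    exact hroot _ (by omega) h2

variable {q} in
lemma brk_ne (hq : q ≠ 0) (hroot : ∀ n : ℕ, 0 < n → q ^ n ≠ 1)
    {k : ℤ} (hk : k ≠ 0) : brk q k ≠ 0 := by
  have h1 : q ^ k - q ^ (-k) = q ^ (-k) * (q ^ (2 * k) - 1) := by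
    rw [mul_sub, mul_one, ← zpow_add₀ hq]
    ring_nf
  rw [brk, h1]
  exact mul_ne_zero (zpow_ne_zero _ hq)
    (sub_ne_zero_of_ne (zpow_ne_one hq hroot (by omega)))

/-- `S_m = (bad a)_m ∘ (ad_m a) / (q^{2m} - q^{-2m})`, with `S_0 = id`. -/
noncomputable def Smap (q : F) (a : A) : ℕ → A → A
  | 0 => id
  | (m + 1) => fun x =>
      (q ^ (2 * (m + 1) : ℤ) - q ^ (-(2 * (m + 1)) : ℤ))⁻¹ •
        badProd q a (m + 1) (qad q a ((m : ℤ) + 1) x)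

/-- `S'_m = (bad a)_m ∘ (ad_{-m} a) / (q^{2m} - q^{-2m})`, with `S'_0 = id`. -/
noncomputable def Smap' (q : F) (a : A) : ℕ → A → A
  | 0 => id
  | (m + 1) => fun x =>
      (q ^ (2 * (m + 1) : ℤ) - q ^ (-(2 * (m + 1)) : ℤ))⁻¹ •
        badProd q a (m + 1) (qad q a (-((m : ℤ) + 1)) x)

lemma Smap_succ (m : ℕ) (x : A) : Smap q a (m + 1) x =
    (brk q (2 * (m + 1) : ℤ))⁻¹ • badProd q a (m + 1) (qad q a ((m : ℤ) + 1) x) := by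
  rw [Smap, brk]


lemma Smap'_succ (m : ℕ) (x : A) : Smap' q a (m + 1) x =
    (brk q (2 * (m + 1) : ℤ))⁻¹ • badProd q a (m + 1) (qad q a (-((m : ℤ) + 1)) x) := by
  rw [Smap', brk]


variable {q} in
/-- key quadratic identity -/
lemma key4 (hq : q ≠ 0) (r s : ℤ) (x : A) :
    brk q (r + s) • (qad q a r (qad q a (-s) x) + qad q a s (qad q a (-r) x)) =
      brk q (2 * r) • qad q a s (qad q a (-s) x)
        + brk q (2 * s) • qad q a r (qad q a (-r) x) := by
  have hr : q ^ r ≠ 0 := zpow_ne_zero _ hq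
  have hs : q ^ s ≠ 0 := zpow_ne_zero _ hq
  simp only [qad_qad, brk, two_mul, neg_add, neg_neg, zpow_add₀ hq, zpow_neg]
  match_scalars <;> field_simp <;> ring

lemma zpow_twice (hq : q ≠ 0) (k : ℤ) : q ^ (2 * k) = q ^ k * q ^ k := by
  rw [two_mul, zpow_add₀ hq]

lemma brk_one : brk q 1 = q - q⁻¹ := by rw [brk, zpow_one, zpow_neg, zpow_one]

lemma bad_succ' (m : ℕ) (x : A) : bad q a (m + 1) x =
    (brk q (2 * ((m : ℤ) + 1)) * brk q (2 * ((m : ℤ) + 1) + 1))⁻¹ •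
      ((brk q (2 * ((m : ℤ) + 1))) ^ 2 • x +
        qad q a ((m : ℤ) + 1) (qad q a (-((m : ℤ) + 1)) x)) := by
  have h : (-(2 * ((m : ℤ) + 1)) - 1) = -(2 * ((m : ℤ) + 1) + 1) := by ring
  rw [bad_succ]
  push_cast
  rw [h, brk, brk]

variable {q} in
lemma gamma_eq (hq : q ≠ 0) (hroot : ∀ n : ℕ, 0 < n → q ^ n ≠ 1) (m : ℕ) (x : A) :
    qad q a ((m : ℤ) + 1) (qad q a (-((m : ℤ) + 1)) x) =
      (brk q (2 * ((m : ℤ) + 1)) * brk q (2 * ((m : ℤ) + 1) + 1)) • bad q a (m + 1) x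
        - (brk q (2 * ((m : ℤ) + 1))) ^ 2 • x := by
  have hc : (brk q (2 * ((m : ℤ) + 1)) * brk q (2 * ((m : ℤ) + 1) + 1)) ≠ 0 :=
    mul_ne_zero (brk_ne hq hroot (by omega)) (brk_ne hq hroot (by omega))
  rw [bad_succ' q a m x, smul_smul, mul_inv_cancel₀ hc, one_smul]
  abel

lemma badProd_neg (m : ℕ) (y : A) : badProd q a m (-y) = - badProd q a m y := by
  simpa using badProd_smul q a m (-1) y

lemma badProd_sub (m : ℕ) (x y : A) :
    badProd q a m (x - y) = badProd q a m x - badProd q a m y := by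
  simp only [sub_eq_add_neg, badProd_add, badProd_neg]

variable {q} in
lemma gred (hq : q ≠ 0) (hroot : ∀ n : ℕ, 0 < n → q ^ n ≠ 1) (m : ℕ) (x : A) :
    badProd q a (m + 1) (qad q a ((m : ℤ) + 1) (qad q a (-((m : ℤ) + 1)) x)) =
      (brk q (2 * ((m : ℤ) + 1)) * brk q (2 * ((m : ℤ) + 1) + 1)) • badProd q a (m + 2) x
        - (brk q (2 * ((m : ℤ) + 1))) ^ 2 • badProd q a (m + 1) x := by
  rw [gamma_eq a hq hroot, badProd_sub, badProd_smul, badProd_smul]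
  have h1 : badProd q a (m + 2) x = bad q a (m + 1) (badProd q a (m + 1) x) := rfl
  rw [h1, ← bad_badProd]

lemma SS' (i j : ℕ) (x : A) : Smap q a (i + 1) (Smap' q a (j + 1) x) =
    ((brk q (2 * ((i : ℤ) + 1)) * brk q (2 * ((j : ℤ) + 1)))⁻¹) •
      badProd q a (i + 1) (badProd q a (j + 1)
        (qad q a ((i : ℤ) + 1) (qad q a (-((j : ℤ) + 1)) x))) := by
  rw [Smap'_succ, Smap_succ, qad_smul, badProd_smul, smul_smul, qad_badProd, badProd_badProd]
  rw [mul_inv, mul_comm]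

variable {q} in
lemma brk_double (hq : q ≠ 0) (k : ℤ) :
    brk q (2 * k) = brk q k * (q ^ k + q ^ (-k)) := by
  simp only [brk, zpow_twice q hq, zpow_neg, mul_inv]
  field_simp [zpow_ne_zero k hq]
  ring

variable {q} in
lemma pairwise (hq : q ≠ 0) (hroot : ∀ n : ℕ, 0 < n → q ^ n ≠ 1) (i j : ℕ) (x : A) :
    Smap q a (i + 1) (Smap' q a (j + 1) x) + Smap q a (j + 1) (Smap' q a (i + 1) x) =
      (brk q (2 * ((j : ℤ) + 1)) * brk q (((i : ℤ) + 1) + ((j : ℤ) + 1)))⁻¹ •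
        badProd q a (i + 1) (badProd q a (j + 1)
          (qad q a ((j : ℤ) + 1) (qad q a (-((j : ℤ) + 1)) x)))
      + (brk q (2 * ((i : ℤ) + 1)) * brk q (((i : ℤ) + 1) + ((j : ℤ) + 1)))⁻¹ •
        badProd q a (i + 1) (badProd q a (j + 1)
          (qad q a ((i : ℤ) + 1) (qad q a (-((i : ℤ) + 1)) x))) := by
  have hE : brk q (((i : ℤ) + 1) + ((j : ℤ) + 1)) ≠ 0 := brk_ne hq hroot (by omega)
  have hi : brk q (2 * ((i : ℤ) + 1)) ≠ 0 := brk_ne hq hroot (by omega)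
  have hj : brk q (2 * ((j : ℤ) + 1)) ≠ 0 := brk_ne hq hroot (by omega)
  have hkey := key4 a hq ((i : ℤ) + 1) ((j : ℤ) + 1) x
  have h2 := congrArg (fun z => (brk q (((i : ℤ) + 1) + ((j : ℤ) + 1)))⁻¹ •
    badProd q a (i + 1) (badProd q a (j + 1) z)) hkey
  simp only [badProd_smul, badProd_add, smul_smul, smul_add, inv_mul_cancel₀ hE, one_smul] at h2
  rw [SS', SS', badProd_badProd q a (j + 1) (i + 1),
    mul_comm (brk q (2 * ((j : ℤ) + 1))) (brk q (2 * ((i : ℤ) + 1))), ← smul_add, h2]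
  match_scalars <;> field_simp <;> ring

variable {q} in
lemma diagSS (i : ℕ) (x : A) :
    Smap q a (i + 1) (Smap' q a (i + 1) x) =
      (brk q (2 * ((i : ℤ) + 1)) * brk q (((i : ℤ) + 1) + ((i : ℤ) + 1)))⁻¹ •
        badProd q a (i + 1) (badProd q a (i + 1)
          (qad q a ((i : ℤ) + 1) (qad q a (-((i : ℤ) + 1)) x))) := by
  rw [SS']
  rw [show (2 * ((i : ℤ) + 1)) = ((i : ℤ) + 1) + ((i : ℤ) + 1) from two_mul _]

variable {q} in
lemma SpS (hq : q ≠ 0) (hroot : ∀ n : ℕ, 0 < n → q ^ n ≠ 1) (i : ℕ) (x : A) :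
    Smap q a (i + 1) x + Smap' q a (i + 1) x =
      (brk q 1 / brk q ((i : ℤ) + 1)) • badProd q a (i + 1) (badProd q a 1 x) := by
  have h1 : brk q 1 ≠ 0 := brk_ne hq hroot one_ne_zero
  have hi : brk q ((i : ℤ) + 1) ≠ 0 := brk_ne hq hroot (by omega)
  have h2i : brk q (2 * ((i : ℤ) + 1)) ≠ 0 := brk_ne hq hroot (by omega)
  have hS : (q ^ ((i : ℤ) + 1) + q ^ (-((i : ℤ) + 1))) ≠ 0 := by
    intro hc
    exact h2i (by rw [brk_double hq, hc, mul_zero])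
  rw [Smap_succ, Smap'_succ, ← smul_add, ← badProd_add]
  have hd : qad q a ((i : ℤ) + 1) x + qad q a (-((i : ℤ) + 1)) x =
      (q ^ ((i : ℤ) + 1) + q ^ (-((i : ℤ) + 1))) • qad q a 0 x := by
    simp only [qad, neg_zero, zpow_zero, one_smul, smul_sub, add_smul]
    abel
  rw [hd]
  have hq0 : qad q a 0 x = brk q 1 • badProd q a 1 x := by
    have hb1 : badProd q a 1 x = (q - q⁻¹)⁻¹ • qad q a 0 x := rfl
    rw [hb1, smul_smul, brk_one, mul_inv_cancel₀ (brk_one q ▸ h1), one_smul]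
  rw [hq0, badProd_smul, badProd_smul, smul_smul, smul_smul, brk_double hq]
  congr 1
  rw [mul_inv, mul_assoc ((brk q ((i : ℤ) + 1))⁻¹), inv_mul_cancel₀ hS, mul_one, div_eq_inv_mul]

lemma Smap_add (m : ℕ) (x y : A) : Smap q a m (x + y) = Smap q a m x + Smap q a m y := by
  cases m with
  | zero => rfl
  | succ m => rw [Smap_succ, Smap_succ, Smap_succ, qad_add, badProd_add, smul_add]

lemma qad_zero_arg (r : ℤ) : qad q a r (0 : A) = 0 := by simp [qad]

lemma badProd_zero_arg (m : ℕ) : badProd q a m (0 : A) = 0 := by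
  simpa using badProd_smul q a m 0 0

lemma Smap_zero_arg (m : ℕ) : Smap q a m (0 : A) = 0 := by
  cases m with
  | zero => rfl
  | succ m => rw [Smap_succ, qad_zero_arg, badProd_zero_arg, smul_zero]

lemma Smap_sum (m : ℕ) {s : Finset ℕ} (f : ℕ → A) :
    Smap q a m (∑ j ∈ s, f j) = ∑ j ∈ s, Smap q a m (f j) := by
  classical
  induction s using Finset.induction_on with
  | empty => simpa using Smap_zero_arg q a m
  | insert _ _ h ih => rw [Finset.sum_insert h, Finset.sum_insert h, Smap_add, ih]

/-- coefficient on the RHS -/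
noncomputable def cA (q : F) (n r : ℕ) : F :=
  brk q (2 * (n : ℤ) + 1) / brk q ((n : ℤ) + (r : ℤ) + 1)

noncomputable def cB (q : F) (i j : ℕ) : F :=
  brk q (2 * (j : ℤ) + 3) / brk q ((i : ℤ) + (j : ℤ) + 2)

noncomputable def cC (q : F) (i j : ℕ) : F :=
  brk q (2 * (j : ℤ) + 2) / brk q ((i : ℤ) + (j : ℤ) + 2)

noncomputable def c1 (q : F) (i : ℕ) : F := brk q 1 / brk q ((i : ℤ) + 1)

section scalars
variable {q}

lemma cA_diag (hq : q ≠ 0) (hroot : ∀ n : ℕ, 0 < n → q ^ n ≠ 1) (n : ℕ) : cA q n n = 1 := by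
  rw [cA, show ((n : ℤ) + (n : ℤ) + 1) = 2 * (n : ℤ) + 1 from by ring,
    div_self (brk_ne hq hroot (by omega))]

lemma cC_diag (hq : q ≠ 0) (hroot : ∀ n : ℕ, 0 < n → q ^ n ≠ 1) (n : ℕ) : cC q n n = 1 := by
  rw [cC, show ((n : ℤ) + (n : ℤ) + 2) = 2 * (n : ℤ) + 2 from by ring,
    div_self (brk_ne hq hroot (by omega))]

lemma cB_cA (i n : ℕ) : cB q i n = cA q (n + 1) i := by
  rw [cB, cA]
  push_cast
  ring_nf

lemma c1_cA (n : ℕ) : c1 q n = cA q 0 n := by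
  rw [c1, cA]
  norm_num

lemma cB_shift (n j : ℕ) : cB q n j = cA q (j + 1) n := by
  rw [cB, cA]
  push_cast
  ring_nf

/-- `(s)·{t} = (s+t) + (s-t)` -/
lemma brk_mul_tri (hq : q ≠ 0) (s t : ℤ) :
    brk q s * (q ^ t + q ^ (-t)) = brk q (s + t) + brk q (s - t) := by
  have hS : q ^ s ≠ 0 := zpow_ne_zero _ hq
  have hT : q ^ t ≠ 0 := zpow_ne_zero _ hq
  simp only [brk, zpow_add₀ hq, zpow_sub₀ hq, zpow_neg, neg_add, neg_sub, mul_inv]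
  field_simp
  ring

/-- the central coefficient identity -/
lemma coeff_id (hq : q ≠ 0) (hroot : ∀ n : ℕ, 0 < n → q ^ n ≠ 1) (n j : ℕ) :
    cA q j n + cA q n j = cC q j n + cC q n j := by
  have hd1 : brk q ((n : ℤ) + (j : ℤ) + 1) ≠ 0 := brk_ne hq hroot (by omega)
  have hd2 : brk q ((n : ℤ) + (j : ℤ) + 2) ≠ 0 := brk_ne hq hroot (by omega)
  rw [cA, cA, cC, cC,
    show ((j : ℤ) + (n : ℤ) + 1) = (n : ℤ) + (j : ℤ) + 1 from by ring,
    show ((j : ℤ) + (n : ℤ) + 2) = (n : ℤ) + (j : ℤ) + 2 from by ring,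
    ← add_div, ← add_div,
    show (2 * (j : ℤ) + 1) = ((n : ℤ) + (j : ℤ) + 1) + ((j : ℤ) - (n : ℤ)) from by ring,
    show (2 * (n : ℤ) + 1) = ((n : ℤ) + (j : ℤ) + 1) - ((j : ℤ) - (n : ℤ)) from by ring,
    show (2 * (j : ℤ) + 2) = ((n : ℤ) + (j : ℤ) + 2) + ((j : ℤ) - (n : ℤ)) from by ring,
    show (2 * (n : ℤ) + 2) = ((n : ℤ) + (j : ℤ) + 2) - ((j : ℤ) - (n : ℤ)) from by ring,
    ← brk_mul_tri hq,
    add_comm (brk q ((((n : ℤ) + (j : ℤ) + 2)) - ((j : ℤ) - (n : ℤ)))),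
    ← brk_mul_tri hq,]
  field_simp

end scalars

section sums
variable {M : Type*} [AddCommMonoid M]

lemma sum_expand (h : ℕ → ℕ → M) (n : ℕ) :
    ∑ i ∈ range (n + 1), ∑ j ∈ range (n + 1), h i j
      = (∑ i ∈ range n, ∑ j ∈ range n, h i j) + (∑ i ∈ range n, h i n)
        + (∑ j ∈ range n, h n j) + h n n := by
  rw [Finset.sum_range_succ]
  simp only [Finset.sum_range_succ]
  rw [Finset.sum_add_distrib]
  abel

lemma sum_sq_symm (f g : ℕ → ℕ → M)
    (h1 : ∀ i j, f i j + f j i = g i j + g j i) (h2 : ∀ i, f i i = g i i) (n : ℕ) :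
    ∑ i ∈ range n, ∑ j ∈ range n, f i j = ∑ i ∈ range n, ∑ j ∈ range n, g i j := by
  induction n with
  | zero => simp
  | succ n ih =>
      rw [sum_expand f n, sum_expand g n, ih, h2 n]
      congr 1
      rw [add_assoc, add_assoc]
      congr 1
      rw [← Finset.sum_add_distrib, ← Finset.sum_add_distrib]
      exact Finset.sum_congr rfl fun j _ => h1 j n

end sums

variable {q} in
lemma combC (hq : q ≠ 0) (hroot : ∀ n : ℕ, 0 < n → q ^ n ≠ 1)
    (W : ℕ → ℕ → A) (hW : ∀ s t, W s t = W t s) (n : ℕ) :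
    (∑ i ∈ range n, c1 q i • W (i + 1) 1)
      + ∑ i ∈ range n, ∑ j ∈ range n,
          (cB q i j • W (i + 1) (j + 2) - cC q i j • W (i + 1) (j + 1))
      = ∑ r ∈ range n, cA q n r • W (n + 1) (r + 1) := by
  induction n with
  | zero => simp
  | succ n ih =>
      rw [Finset.sum_range_succ (fun i => c1 q i • W (i + 1) 1),
        sum_expand (fun i j => cB q i j • W (i + 1) (j + 2) - cC q i j • W (i + 1) (j + 1)) n]
      -- regroup to use ih
      have step1 : (∑ i ∈ range n, c1 q i • W (i + 1) 1) + c1 q n • W (n + 1) 1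
          + ((∑ i ∈ range n, ∑ j ∈ range n,
              (cB q i j • W (i + 1) (j + 2) - cC q i j • W (i + 1) (j + 1)))
            + (∑ i ∈ range n, (cB q i n • W (i + 1) (n + 2) - cC q i n • W (i + 1) (n + 1)))
            + (∑ j ∈ range n, (cB q n j • W (n + 1) (j + 2) - cC q n j • W (n + 1) (j + 1)))
            + (cB q n n • W (n + 1) (n + 2) - cC q n n • W (n + 1) (n + 1)))
          = (∑ r ∈ range n, cA q n r • W (n + 1) (r + 1))
            + c1 q n • W (n + 1) 1
            + (∑ i ∈ range n, (cB q i n • W (i + 1) (n + 2) - cC q i n • W (i + 1) (n + 1)))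
            + (∑ j ∈ range n, (cB q n j • W (n + 1) (j + 2) - cC q n j • W (n + 1) (j + 1)))
            + (cB q n n • W (n + 1) (n + 2) - cC q n n • W (n + 1) (n + 1)) := by
        rw [← ih]; abel
      rw [step1]
      -- expand RHS
      rw [Finset.sum_range_succ (fun r => cA q (n + 1) r • W (n + 1 + 1) (r + 1))]
      -- identify the (n+2)-terms
      have hBn : ∑ i ∈ range n, (cB q i n • W (i + 1) (n + 2) - cC q i n • W (i + 1) (n + 1))
          = (∑ i ∈ range n, cA q (n + 1) i • W (n + 1 + 1) (i + 1))
            - ∑ i ∈ range n, cC q i n • W (n + 1) (i + 1) := by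
        rw [← Finset.sum_sub_distrib]
        refine Finset.sum_congr rfl fun i _ => ?_
        rw [cB_cA, hW (i + 1) (n + 2), hW (i + 1) (n + 1)]
      have hnn : cB q n n • W (n + 1) (n + 2) - cC q n n • W (n + 1) (n + 1)
          = cA q (n + 1) n • W (n + 1 + 1) (n + 1) - W (n + 1) (n + 1) := by
        rw [cB_cA, hW (n + 1) (n + 2), cC_diag hq hroot, one_smul]
      have hshift : ∑ j ∈ range n, (cB q n j • W (n + 1) (j + 2) - cC q n j • W (n + 1) (j + 1))
          = (∑ j ∈ range n, cA q j n • W (n + 1) (j + 1)) + W (n + 1) (n + 1)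
            - (∑ j ∈ range n, cC q n j • W (n + 1) (j + 1)) - c1 q n • W (n + 1) 1 := by
        have h5 := Finset.sum_range_succ' (fun j => cA q j n • W (n + 1) (j + 1)) n
        rw [Finset.sum_range_succ (fun j => cA q j n • W (n + 1) (j + 1)), cA_diag hq hroot,
          one_smul] at h5
        simp only [zero_add] at h5
        have h6 : ∑ j ∈ range n, cB q n j • W (n + 1) (j + 2)
            = ∑ j ∈ range n, cA q (j + 1) n • W (n + 1) (j + 1 + 1) :=
          Finset.sum_congr rfl fun j _ => by rw [cB_shift]
        rw [Finset.sum_sub_distrib, h6, c1_cA, h5]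
        abel
      have hpt : (∑ r ∈ range n, cA q n r • W (n + 1) (r + 1))
            + (∑ j ∈ range n, cA q j n • W (n + 1) (j + 1))
          - ((∑ j ∈ range n, cC q j n • W (n + 1) (j + 1))
            + ∑ j ∈ range n, cC q n j • W (n + 1) (j + 1)) = 0 := by
        rw [sub_eq_zero, ← Finset.sum_add_distrib, ← Finset.sum_add_distrib]
        refine Finset.sum_congr rfl fun j _ => ?_
        rw [← add_smul, ← add_smul, add_comm (cA q n j), coeff_id hq hroot n j]
      have hCn : ∑ i ∈ range n, cC q i n • W (n + 1) (i + 1)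
          = ∑ j ∈ range n, cC q j n • W (n + 1) (j + 1) := rfl
      rw [hBn, hnn, hshift, hCn, ← sub_eq_zero]
      rw [← hpt]
      abel

section assembly
variable {M : Type*} [AddCommMonoid M]

lemma sum_expand0 (h : ℕ → ℕ → M) (n : ℕ) :
    ∑ i ∈ range (n + 1), ∑ j ∈ range (n + 1), h i j
      = (∑ i ∈ range n, ∑ j ∈ range n, h (i + 1) (j + 1)) + (∑ i ∈ range n, h (i + 1) 0)
        + (∑ j ∈ range n, h 0 (j + 1)) + h 0 0 := by
  rw [Finset.sum_range_succ']
  simp only [Finset.sum_range_succ']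
  rw [Finset.sum_add_distrib]
  abel

end assembly

lemma badProd_sum (m : ℕ) {s : Finset ℕ} (f : ℕ → A) :
    badProd q a m (∑ j ∈ s, f j) = ∑ j ∈ s, badProd q a m (f j) := by
  classical
  induction s using Finset.induction_on with
  | empty => simpa using badProd_zero_arg q a m
  | insert _ _ h ih => rw [Finset.sum_insert h, Finset.sum_insert h, badProd_add, ih]

section gr
variable {q}

lemma sc_cB (hq : q ≠ 0) (hroot : ∀ n : ℕ, 0 < n → q ^ n ≠ 1) (i j : ℕ) :
    (brk q (2 * ((j : ℤ) + 1)) * brk q (((i : ℤ) + 1) + ((j : ℤ) + 1)))⁻¹ *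
      (brk q (2 * ((j : ℤ) + 1)) * brk q (2 * ((j : ℤ) + 1) + 1)) = cB q i j := by
  have h1 : brk q (2 * ((j : ℤ) + 1)) ≠ 0 := brk_ne hq hroot (by omega)
  have h2 : brk q (((i : ℤ) + 1) + ((j : ℤ) + 1)) ≠ 0 := brk_ne hq hroot (by omega)
  rw [cB, show (2 * ((j : ℤ) + 1) + 1) = 2 * (j : ℤ) + 3 from by ring,
    show (((i : ℤ) + 1) + ((j : ℤ) + 1)) = (i : ℤ) + (j : ℤ) + 2 from by ring] at *
  field_simp

lemma sc_cC (hq : q ≠ 0) (hroot : ∀ n : ℕ, 0 < n → q ^ n ≠ 1) (i j : ℕ) :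
    (brk q (2 * ((j : ℤ) + 1)) * brk q (((i : ℤ) + 1) + ((j : ℤ) + 1)))⁻¹ *
      (brk q (2 * ((j : ℤ) + 1))) ^ 2 = cC q i j := by
  have h1 : brk q (2 * ((j : ℤ) + 1)) ≠ 0 := brk_ne hq hroot (by omega)
  have h2 : brk q (((i : ℤ) + 1) + ((j : ℤ) + 1)) ≠ 0 := brk_ne hq hroot (by omega)
  rw [cC, show (2 * ((j : ℤ) + 1)) = 2 * (j : ℤ) + 2 from by ring,
    show (((i : ℤ) + 1) + ((j : ℤ) + 1)) = (i : ℤ) + (j : ℤ) + 2 from by ring] at *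
  field_simp

lemma g_red (hq : q ≠ 0) (hroot : ∀ n : ℕ, 0 < n → q ^ n ≠ 1) (i j : ℕ) (x : A) :
    (brk q (2 * ((j : ℤ) + 1)) * brk q (((i : ℤ) + 1) + ((j : ℤ) + 1)))⁻¹ •
      badProd q a (i + 1) (badProd q a (j + 1)
        (qad q a ((j : ℤ) + 1) (qad q a (-((j : ℤ) + 1)) x)))
    = cB q i j • badProd q a (i + 1) (badProd q a (j + 2) x)
      - cC q i j • badProd q a (i + 1) (badProd q a (j + 1) x) := by
  rw [gred a hq hroot j x, badProd_sub, badProd_smul, badProd_smul, smul_sub, smul_smul,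
    smul_smul, sc_cB hq hroot, sc_cC hq hroot]

end gr

theorem stmt7 (q : F) (hq : q ≠ 0) (hroot : ∀ n : ℕ, 0 < n → q ^ n ≠ 1) (a : A) (n : ℕ) (x : A) :
    ∑ i ∈ Finset.range (n + 1), Smap q a i (∑ j ∈ Finset.range (n + 1), Smap' q a j x) =
      x + badProd q a (n + 1)
        (∑ r ∈ Finset.range n,
          ((q ^ (2 * (n : ℤ) + 1) - q ^ (-(2 * (n : ℤ)) - 1)) /
              (q ^ ((n : ℤ) + r + 1) - q ^ (-((n : ℤ) + r + 1)))) •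
            badProd q a (r + 1) x) := by
  classical
  -- push Smap through the inner sum
  have h0 : ∀ i ∈ Finset.range (n + 1),
      Smap q a i (∑ j ∈ Finset.range (n + 1), Smap' q a j x)
        = ∑ j ∈ Finset.range (n + 1), Smap q a i (Smap' q a j x) :=
    fun i _ => Smap_sum q a i _
  rw [Finset.sum_congr rfl h0, sum_expand0 (fun i j => Smap q a i (Smap' q a j x)) n]
  -- corner term
  have hcor : Smap q a 0 (Smap' q a 0 x) = x := rfl
  -- the single sums
  have hsingle : (∑ i ∈ range n, Smap q a (i + 1) (Smap' q a 0 x))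
        + (∑ j ∈ range n, Smap q a 0 (Smap' q a (j + 1) x))
      = ∑ i ∈ range n, c1 q i • badProd q a (i + 1) (badProd q a 1 x) := by
    rw [← Finset.sum_add_distrib]
    refine Finset.sum_congr rfl fun i _ => ?_
    have e1 : Smap q a (i + 1) (Smap' q a 0 x) = Smap q a (i + 1) x := rfl
    have e2 : Smap q a 0 (Smap' q a (i + 1) x) = Smap' q a (i + 1) x := rfl
    rw [e1, e2, SpS a hq hroot i x, c1]
  -- symmetrize double sum
  have hsym : ∑ i ∈ range n, ∑ j ∈ range n, Smap q a (i + 1) (Smap' q a (j + 1) x)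
      = ∑ i ∈ range n, ∑ j ∈ range n,
          (brk q (2 * ((j : ℤ) + 1)) * brk q (((i : ℤ) + 1) + ((j : ℤ) + 1)))⁻¹ •
            badProd q a (i + 1) (badProd q a (j + 1)
              (qad q a ((j : ℤ) + 1) (qad q a (-((j : ℤ) + 1)) x))) := by
    refine sum_sq_symm _ _ (fun i j => ?_) (fun i => diagSS a i x) n
    rw [pairwise a hq hroot i j x,
      show (((j : ℤ) + 1) + ((i : ℤ) + 1)) = (((i : ℤ) + 1) + ((j : ℤ) + 1)) from by ring,
      badProd_badProd q a (j + 1) (i + 1)]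
  rw [hsym]
  -- gamma-reduce each summand of the double sum
  have hgr : ∑ i ∈ range n, ∑ j ∈ range n,
        (brk q (2 * ((j : ℤ) + 1)) * brk q (((i : ℤ) + 1) + ((j : ℤ) + 1)))⁻¹ •
          badProd q a (i + 1) (badProd q a (j + 1)
            (qad q a ((j : ℤ) + 1) (qad q a (-((j : ℤ) + 1)) x)))
      = ∑ i ∈ range n, ∑ j ∈ range n,
          (cB q i j • badProd q a (i + 1) (badProd q a (j + 2) x)
            - cC q i j • badProd q a (i + 1) (badProd q a (j + 1) x)) :=
    Finset.sum_congr rfl fun i _ => Finset.sum_congr rfl fun j _ => g_red a hq hroot i j x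
  rw [hgr]
  -- apply the combinatorial identity
  have hW : ∀ s t : ℕ, badProd q a s (badProd q a t x) = badProd q a t (badProd q a s x) :=
    fun s t => badProd_badProd q a s t x
  have hC := combC hq hroot (fun s t => badProd q a s (badProd q a t x)) hW n
  -- convert the RHS
  have hR : badProd q a (n + 1)
        (∑ r ∈ Finset.range n,
          ((q ^ (2 * (n : ℤ) + 1) - q ^ (-(2 * (n : ℤ)) - 1)) /
              (q ^ ((n : ℤ) + r + 1) - q ^ (-((n : ℤ) + r + 1)))) •
            badProd q a (r + 1) x)
      = ∑ r ∈ range n, cA q n r • badProd q a (n + 1) (badProd q a (r + 1) x) := by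
    rw [badProd_sum]
    refine Finset.sum_congr rfl fun r _ => ?_
    rw [badProd_smul]
    congr 1
    simp only [cA, brk]
    rw [show (-(2 * (n : ℤ)) - 1) = -(2 * (n : ℤ) + 1) from by ring]
  have htot : (∑ i ∈ range n, ∑ j ∈ range n,
        (cB q i j • badProd q a (i + 1) (badProd q a (j + 2) x)
          - cC q i j • badProd q a (i + 1) (badProd q a (j + 1) x)))
      + ((∑ i ∈ range n, Smap q a (i + 1) (Smap' q a 0 x))
        + (∑ j ∈ range n, Smap q a 0 (Smap' q a (j + 1) x)))
      = ∑ r ∈ range n, cA q n r • badProd q a (n + 1) (badProd q a (r + 1) x) := by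
    rw [hsingle, ← hC]; abel
  rw [hcor, hR, ← htot]
  abel
end

section
/- Let A be an associative algebra over F, a ∈ A, and let x ∈ A commute with a. Then for every n ∈ ℕ, S_n(x) = 0 for n ≥ 1 and S'_n(x) = 0 for n ≥ 1; in particular the maps S = ∑_n S_n and S' = ∑_n S'_n fix x. -/
open Finset

variable {F : Type*} [Field F] {A : Type*} [Ring A] [Algebra F A]

lemma qad_zero (q : F) (a : A) (r : ℤ) : qad q a r 0 = 0 := by
  simp [qad]

lemma bad_zero_s19 (q : F) (a : A) (m : ℕ) : bad q a m 0 = 0 := by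
  cases m <;> simp [bad, qad_zero]

lemma qad_comm_s19 (q : F) (a : A) {y : A} (hy : a * y = y * a) (r : ℤ) :
    qad q a r y = (q ^ r - q ^ (-r)) • (a * y) := by
  rw [qad, hy, sub_smul]

lemma bad_zero_comm (q : F) (a : A) {y : A} (hy : a * y = y * a) :
    bad q a 0 y = 0 := by
  simp [bad, qad, hy]

lemma badProd_comm_zero (q : F) (a : A) {y : A} (hy : a * y = y * a) (m : ℕ) :
    badProd q a (m + 1) y = 0 := by
  induction m with
  | zero => simpa [badProd] using bad_zero_comm q a hy
  | succ m ih =>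
      show bad q a (m + 1) (badProd q a (m + 1) y) = 0
      rw [ih, bad_zero_s19]

lemma smul_ax_comm (q : F) (a x : A) (hx : a * x = x * a) (c : F) :
    a * (c • (a * x)) = (c • (a * x)) * a := by
  rw [mul_smul_comm, smul_mul_assoc, mul_assoc, ← hx]

lemma Smap_succ_zero (q : F) (a x : A) (hx : a * x = x * a) (m : ℕ) :
    Smap q a (m + 1) x = 0 := by
  show (_ : F)⁻¹ • badProd q a (m + 1) (qad q a ((m : ℤ) + 1) x) = 0
  rw [qad_comm_s19 q a hx, badProd_comm_zero q a (smul_ax_comm q a x hx _), smul_zero]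

lemma Smap'_succ_zero (q : F) (a x : A) (hx : a * x = x * a) (m : ℕ) :
    Smap' q a (m + 1) x = 0 := by
  show (_ : F)⁻¹ • badProd q a (m + 1) (qad q a (-((m : ℤ) + 1)) x) = 0
  rw [qad_comm_s19 q a hx, badProd_comm_zero q a (smul_ax_comm q a x hx _), smul_zero]

theorem stmt19 (q : F) (hq : q ≠ 0) (hroot : ∀ n : ℕ, 0 < n → q ^ n ≠ 1) (a : A) (x : A) (hx : a * x = x * a) :
    (∀ n : ℕ, 1 ≤ n → Smap q a n x = 0 ∧ Smap' q a n x = 0) ∧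
    (∀ N : ℕ, ∑ n ∈ Finset.range (N + 1), Smap q a n x = x ∧
      ∑ n ∈ Finset.range (N + 1), Smap' q a n x = x) := by
  refine ⟨fun n hn => ?_, fun N => ?_⟩
  · obtain ⟨m, rfl⟩ := Nat.exists_eq_succ_of_ne_zero (Nat.one_le_iff_ne_zero.mp hn)
    exact ⟨Smap_succ_zero q a x hx m, Smap'_succ_zero q a x hx m⟩
  · constructor
    · rw [Finset.sum_range_succ', Finset.sum_eq_zero fun i _ => Smap_succ_zero q a x hx i,
        zero_add]
      rfl
    · rw [Finset.sum_range_succ', Finset.sum_eq_zero fun i _ => Smap'_succ_zero q a x hx i,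
        zero_add]
      rfl
end
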